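/- Let β, β1, β2 ∈ (0,1) with β1 ≤ β and β2 ≤ β. Then the bound gap satisfies Δ(β,β1,β2) ≤ (β − β1) + (β − β2). -/
import Mathlib


/-- F_l(μ,β) = −(μ·ln((1−μ)·β + μ) + (1−μ)·ln(μ·β + (1−μ))). -/
noncomputable def Fl (μ β : ℝ) : ℝ :=
  -(μ * Real.log ((1 - μ) * β + μ) + (1 - μ) * Real.log (μ * β + (1 - μ)))

/-- F_u(μ,β1,β2) = −(μ·ln((1−μ)·β1 + μ) + (1−μ)·ln(μ·β2 + (1−μ))). -/
noncomputable def Fu (μ β1 β2 : ℝ) : ℝ :=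
  -(μ * Real.log ((1 - μ) * β1 + μ) + (1 - μ) * Real.log (μ * β2 + (1 - μ)))

/-- The bound gap Δ(β,β1,β2) = sup_{μ∈[0,1]} (F_u(μ,β1,β2) − F_l(μ,β)). -/
noncomputable def boundGap (β β1 β2 : ℝ) : ℝ :=
  ⨆ μ : Set.Icc (0:ℝ) 1, (Fu μ β1 β2 - Fl μ β)

lemma log_diff_aux (t x y : ℝ) (ht : 0 ≤ t) (hty : t ≤ y) (hy : 0 < y) (hyx : y ≤ x) :
    t * (Real.log x - Real.log y) ≤ x - y := by
  have hx : 0 < x := lt_of_lt_of_le hy hyx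
  have hlog : Real.log x - Real.log y ≤ (x - y) / y := by
    rw [← Real.log_div (ne_of_gt hx) (ne_of_gt hy)]
    have h := Real.log_le_sub_one_of_pos (show (0:ℝ) < x / y by positivity)
    have : x / y - 1 = (x - y) / y := by field_simp
    linarith [this ▸ h]
  calc t * (Real.log x - Real.log y) ≤ t * ((x - y) / y) :=
        mul_le_mul_of_nonneg_left hlog ht
    _ ≤ x - y := by
        rw [mul_div_assoc' , div_le_iff₀ hy]
        nlinarith

/-- high-SNR bound: for β, β1, β2 ∈ (0,1) with β1 ≤ β and β2 ≤ β,
Δ(β,β1,β2) ≤ (β − β1) + (β − β2). -/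
theorem boundGap_le_highSNR (β β1 β2 : ℝ)
    (hβ : β ∈ Set.Ioo (0:ℝ) 1) (hβ1 : β1 ∈ Set.Ioo (0:ℝ) 1) (hβ2 : β2 ∈ Set.Ioo (0:ℝ) 1)
    (h1 : β1 ≤ β) (h2 : β2 ≤ β) :
    boundGap β β1 β2 ≤ (β - β1) + (β - β2) := by
  obtain ⟨hb0, hb1⟩ := hβ
  obtain ⟨hb10, hb11⟩ := hβ1
  obtain ⟨hb20, hb21⟩ := hβ2
  haveI : Nonempty (Set.Icc (0:ℝ) 1) := ⟨⟨0, by norm_num⟩⟩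
  apply ciSup_le
  rintro ⟨μ, hμ0, hμ1⟩
  simp only [Fu, Fl]
  have key1 : μ * (Real.log ((1 - μ) * β + μ) - Real.log ((1 - μ) * β1 + μ))
      ≤ ((1 - μ) * β + μ) - ((1 - μ) * β1 + μ) := by
    apply log_diff_aux <;> nlinarith
  have key2 : (1 - μ) * (Real.log (μ * β + (1 - μ)) - Real.log (μ * β2 + (1 - μ)))
      ≤ (μ * β + (1 - μ)) - (μ * β2 + (1 - μ)) := by
    apply log_diff_aux <;> nlinarith
  nlinarith
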